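/- Let A be a real symmetric m×m matrix whose eigenvalues λ = (λ_1,…,λ_m) satisfy S_1(λ) ≥ 0 and S_2(λ) ≥ 0. Then the matrix (trace A)·I_m − A is positive semidefinite. -/

import Mathlib

open MeasureTheory Filter Topology

noncomputable section

/-- Action of a first-order vector field with coefficient vector `c` on a function `u`:
`(Xu)(x) = ∑ j c(x)_j D_j u(x) = Du(x)·c(x)`. -/
def Xop {n : ℕ} (c : (Fin n → ℝ) → (Fin n → ℝ)) (u : (Fin n → ℝ) → ℝ)
    (x : Fin n → ℝ) : ℝ :=
  fderiv ℝ u x (c x)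

/-- Lie bracket of the coefficient vector fields `c`, `d`. -/
def vfBracket {n : ℕ} (c d : (Fin n → ℝ) → (Fin n → ℝ)) (x : Fin n → ℝ) :
    Fin n → ℝ :=
  fun l => fderiv ℝ (fun y => d y l) x (c x) - fderiv ℝ (fun y => c y l) x (d x)

/-- The sub-Laplacian `Δ_X u = ∑ i X_i X_i u`. -/
def subLap {n m : ℕ} (b : Fin m → (Fin n → ℝ) → (Fin n → ℝ))
    (u : (Fin n → ℝ) → ℝ) (x : Fin n → ℝ) : ℝ :=
  ∑ i, Xop (b i) (Xop (b i) u) x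

/-- The commutator `[X_i, X_j] u = X_i X_j u - X_j X_i u`. -/
def commOp {n m : ℕ} (b : Fin m → (Fin n → ℝ) → (Fin n → ℝ)) (i j : Fin m)
    (u : (Fin n → ℝ) → ℝ) (x : Fin n → ℝ) : ℝ :=
  Xop (b i) (Xop (b j) u) x - Xop (b j) (Xop (b i) u) x

/-- The symmetric Hessian `X_s² u = [½ (X_i X_j + X_j X_i) u]`. -/
def symmHess {n m : ℕ} (b : Fin m → (Fin n → ℝ) → (Fin n → ℝ))
    (u : (Fin n → ℝ) → ℝ) (x : Fin n → ℝ) : Matrix (Fin m) (Fin m) ℝ :=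
  fun i j => (Xop (b i) (Xop (b j) u) x + Xop (b j) (Xop (b i) u) x) / 2

theorem symmHess_isHermitian {n m : ℕ} (b : Fin m → (Fin n → ℝ) → (Fin n → ℝ))
    (u : (Fin n → ℝ) → ℝ) (x : Fin n → ℝ) : (symmHess b u x).IsHermitian := by
  unfold Matrix.IsHermitian
  ext i j
  simp only [Matrix.conjTranspose_apply, symmHess, star_trivial]
  ring

/-- Eigenvalues of the symmetric Hessian. -/
def hessEig {n m : ℕ} (b : Fin m → (Fin n → ℝ) → (Fin n → ℝ))
    (u : (Fin n → ℝ) → ℝ) (x : Fin n → ℝ) : Fin m → ℝ :=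
  (symmHess_isHermitian b u x).eigenvalues

/-- `k`-th elementary symmetric function of `m` real numbers. -/
def esymmF {m : ℕ} (k : ℕ) (lam : Fin m → ℝ) : ℝ :=
  ∑ s ∈ Finset.powersetCard k (Finset.univ : Finset (Fin m)), ∏ i ∈ s, lam i

/-- `S_{j,i}(λ)`: the `j`-th elementary symmetric function with the variable `λ_i` set to `0`. -/
def esymmDrop {m : ℕ} (j : ℕ) (i : Fin m) (lam : Fin m → ℝ) : ℝ :=
  ∑ s ∈ Finset.powersetCard j ((Finset.univ : Finset (Fin m)).erase i), ∏ l ∈ s, lam l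

/-- `u` is `k`-convex with respect to the vector fields `b` on `Ω`:
`S_j(λ(X_s²u)) ≥ 0` on `Ω` for `j = 1, …, k`. -/
def IsKConvex {n m : ℕ} (Ω : Set (Fin n → ℝ)) (b : Fin m → (Fin n → ℝ) → (Fin n → ℝ))
    (k : ℕ) (u : (Fin n → ℝ) → ℝ) : Prop :=
  ∀ x ∈ Ω, ∀ j, 1 ≤ j → j ≤ k → 0 ≤ esymmF j (hessEig b u x)

/-- `F_2[u] = S_2(λ(X_s²u))`. -/
def F2fun {n m : ℕ} (b : Fin m → (Fin n → ℝ) → (Fin n → ℝ))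
    (u : (Fin n → ℝ) → ℝ) (x : Fin n → ℝ) : ℝ :=
  esymmF 2 (hessEig b u x)

/-- `𝓔_2[u] = ∑_{i<j} ([X_i,X_j]u)²`. -/
def E2fun {n m : ℕ} (b : Fin m → (Fin n → ℝ) → (Fin n → ℝ))
    (u : (Fin n → ℝ) → ℝ) (x : Fin n → ℝ) : ℝ :=
  ∑ i : Fin m, ∑ j ∈ Finset.Ioi i, (commOp b i j u x) ^ 2

/-- `𝓕_2[u] = F_2[u] + (3/4) 𝓔_2[u]`. -/
def calF2 {n m : ℕ} (b : Fin m → (Fin n → ℝ) → (Fin n → ℝ))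
    (u : (Fin n → ℝ) → ℝ) (x : Fin n → ℝ) : ℝ :=
  F2fun b u x + (3 / 4) * E2fun b u x

/-- `|Xu|(x)`, the length of the subelliptic gradient. -/
def XgradNorm {n m : ℕ} (b : Fin m → (Fin n → ℝ) → (Fin n → ℝ))
    (u : (Fin n → ℝ) → ℝ) (x : Fin n → ℝ) : ℝ :=
  Real.sqrt (∑ i, (Xop (b i) u x) ^ 2)

/-- Condition (i): each `X_i` is divergence free, i.e. anti-self-adjoint. -/
def DivFree {n m : ℕ} (Ω : Set (Fin n → ℝ))
    (b : Fin m → (Fin n → ℝ) → (Fin n → ℝ)) : Prop :=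
  ∀ i : Fin m, ∀ x ∈ Ω, ∑ j, fderiv ℝ (fun y => b i y j) x (Pi.single j 1) = 0

/-- The set of iterated Lie brackets generated by the fields `b`. -/
inductive LieGen {n m : ℕ} (b : Fin m → (Fin n → ℝ) → (Fin n → ℝ)) :
    ((Fin n → ℝ) → (Fin n → ℝ)) → Prop
  | base (i : Fin m) : LieGen b (b i)
  | bracket {c d : (Fin n → ℝ) → (Fin n → ℝ)} :
      LieGen b c → LieGen b d → LieGen b (fun x => vfBracket c d x)

/-- Condition (ii): the Hörmander condition; iterated commutators span `ℝⁿ` at each point. -/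
def Hormander {n m : ℕ} (Ω : Set (Fin n → ℝ))
    (b : Fin m → (Fin n → ℝ) → (Fin n → ℝ)) : Prop :=
  ∀ x ∈ Ω, Submodule.span ℝ {v : Fin n → ℝ | ∃ c, LieGen b c ∧ c x = v} = ⊤

/-- Condition (iii): all second commutators `[X_i,[X_i,X_j]]` vanish. -/
def SecondCommVanish {n m : ℕ} (Ω : Set (Fin n → ℝ))
    (b : Fin m → (Fin n → ℝ) → (Fin n → ℝ)) : Prop :=
  ∀ i j : Fin m, ∀ x ∈ Ω, vfBracket (b i) (fun y => vfBracket (b i) (b j) y) x = 0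

/-- `Ω' ⊂⊂ Ω`: `Ω'` is open and compactly contained in `Ω`. -/
def CptIn {n : ℕ} (Ω' Ω : Set (Fin n → ℝ)) : Prop :=
  IsOpen Ω' ∧ IsCompact (closure Ω') ∧ closure Ω' ⊆ Ω

/-- A sub-unitary (piecewise C¹) curve on `[0,T]` with respect to the fields `b`. -/
def IsSubunitary {n m : ℕ} (b : Fin m → (Fin n → ℝ) → (Fin n → ℝ)) (T : ℝ)
    (γ : ℝ → Fin n → ℝ) : Prop :=
  ContinuousOn γ (Set.Icc 0 T) ∧
  ∃ S : Finset ℝ, ∀ t ∈ Set.Ioo 0 T, t ∉ S →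
    ∃ γ' : Fin n → ℝ, HasDerivAt γ γ' t ∧
      ∀ ξ : Fin n → ℝ, (∑ j, γ' j * ξ j) ^ 2 ≤ ∑ i, (∑ j, b i (γ t) j * ξ j) ^ 2

/-- The Carnot–Carathéodory distance associated with the fields `b`. -/
def ccDist {n m : ℕ} (b : Fin m → (Fin n → ℝ) → (Fin n → ℝ))
    (x y : Fin n → ℝ) : ℝ :=
  sInf {T : ℝ | 0 < T ∧ ∃ γ : ℝ → Fin n → ℝ,
    IsSubunitary b T γ ∧ γ 0 = x ∧ γ T = y}

/-- The C-C ball of radius `R` about `x`. -/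
def ccBall {n m : ℕ} (b : Fin m → (Fin n → ℝ) → (Fin n → ℝ))
    (x : Fin n → ℝ) (R : ℝ) : Set (Fin n → ℝ) :=
  {y | ccDist b x y < R}

/-- The doubling property `|B_{tR}(x)| ≥ C t^Q |B_R(x)|`. -/
def DoublingDim {n m : ℕ} (Ω : Set (Fin n → ℝ))
    (b : Fin m → (Fin n → ℝ) → (Fin n → ℝ)) (Q : ℕ) : Prop :=
  ∃ C > (0 : ℝ), ∃ R0 > (0 : ℝ), ∀ x ∈ Ω, ∀ t ∈ Set.Ioo (0 : ℝ) 1,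
    ∀ R : ℝ, 0 < R → R < R0 →
      C * t ^ Q * (volume (ccBall b x R)).toReal ≤ (volume (ccBall b x (t * R))).toReal

/-- `Q` is the homogeneous dimension of the system `b` in `Ω`. -/
def IsHomDim {n m : ℕ} (Ω : Set (Fin n → ℝ))
    (b : Fin m → (Fin n → ℝ) → (Fin n → ℝ)) (Q : ℕ) : Prop :=
  0 < Q ∧ DoublingDim Ω b Q ∧ ∀ Q' : ℕ, 0 < Q' → DoublingDim Ω b Q' → Q ≤ Q'

/-- The class `φ^k(Ω)` of `L¹_loc(Ω)` limits of smooth `k`-convex functions. -/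
def PhiK {n m : ℕ} (Ω : Set (Fin n → ℝ)) (b : Fin m → (Fin n → ℝ) → (Fin n → ℝ))
    (k : ℕ) (u : (Fin n → ℝ) → ℝ) : Prop :=
  LocallyIntegrableOn u Ω ∧
  ∀ Ω' : Set (Fin n → ℝ), CptIn Ω' Ω →
    ∃ us : ℕ → (Fin n → ℝ) → ℝ,
      (∀ l, ContDiffOn ℝ 2 (us l) Ω' ∧ IsKConvex Ω' b k (us l)) ∧
      ∀ K : Set (Fin n → ℝ), K ⊆ Ω' → IsCompact K →
        Tendsto (fun l => ∫ x in K, |us l x - u x|) atTop (𝓝 0)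

end


lemma esymmF_one {m : ℕ} (lam : Fin m → ℝ) : esymmF 1 lam = ∑ i, lam i := by
  simp [esymmF, Finset.powersetCard_one]

lemma esymmF_two {m : ℕ} (lam : Fin m → ℝ) :
    esymmF 2 lam = ∑ i, ∑ j ∈ Finset.Ioi i, lam i * lam j := by
  rw [Finset.sum_sigma']
  unfold esymmF
  refine (Finset.sum_bij' (fun p _ => ({p.1, p.2} : Finset (Fin m)))
    (fun s hs => ⟨s.min' (Finset.card_pos.mp (by simp_all [Finset.mem_powersetCard])),
      s.max' (Finset.card_pos.mp (by simp_all [Finset.mem_powersetCard]))⟩)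
    ?_ ?_ ?_ ?_ ?_).symm
  · rintro ⟨i, j⟩ hp
    simp only [Finset.mem_sigma, Finset.mem_Ioi] at hp
    simp [Finset.mem_powersetCard, Finset.card_pair hp.2.ne]
  · rintro s hs
    simp only [Finset.mem_powersetCard] at hs
    simp only [Finset.mem_sigma, Finset.mem_Ioi]
    exact ⟨Finset.mem_univ _, Finset.min'_lt_max'_of_card _ (by omega)⟩
  · rintro ⟨i, j⟩ hp
    simp only [Finset.mem_sigma, Finset.mem_Ioi] at hp
    have hij := hp.2
    have hmin : ({i, j} : Finset (Fin m)).min' ⟨i, by simp⟩ = i := by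
      have h1 := Finset.min'_le ({i, j} : Finset (Fin m)) i (by simp)
      have h2 := Finset.min'_mem ({i, j} : Finset (Fin m)) ⟨i, by simp⟩
      simp only [Finset.mem_insert, Finset.mem_singleton] at h2
      rcases h2 with h | h
      · exact h
      · exact absurd (h ▸ h1) (not_le.mpr hij)
    have hmax : ({i, j} : Finset (Fin m)).max' ⟨i, by simp⟩ = j := by
      have h1 := Finset.le_max' ({i, j} : Finset (Fin m)) j (by simp)
      have h2 := Finset.max'_mem ({i, j} : Finset (Fin m)) ⟨i, by simp⟩
      simp only [Finset.mem_insert, Finset.mem_singleton] at h2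
      rcases h2 with h | h
      · exact absurd (h ▸ h1) (not_le.mpr hij)
      · exact h
    simp only [Sigma.mk.inj_iff]
    exact ⟨hmin, heq_of_eq hmax⟩
  · rintro s hs
    have hs' : s.card = 2 := (Finset.mem_powersetCard.mp hs).2
    have h1 : s.Nonempty := Finset.card_pos.mp (by omega)
    have hlt : s.min' h1 < s.max' h1 := Finset.min'_lt_max'_of_card _ (by omega)
    refine Finset.eq_of_subset_of_card_le ?_ ?_
    · intro x hx
      simp only [Finset.mem_insert, Finset.mem_singleton] at hx
      rcases hx with h | h
      · exact h ▸ s.min'_mem h1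
      · exact h ▸ s.max'_mem h1
    · show s.card ≤ ({s.min' h1, s.max' h1} : Finset (Fin m)).card
      rw [hs', Finset.card_pair hlt.ne]
  · rintro ⟨i, j⟩ hp
    simp only [Finset.mem_sigma, Finset.mem_Ioi] at hp
    exact (Finset.prod_pair hp.2.ne).symm

lemma esymmF_two_identity {m : ℕ} (lam : Fin m → ℝ) :
    2 * esymmF 2 lam = (∑ i, lam i) ^ 2 - ∑ i, lam i ^ 2 := by
  rw [esymmF_two]
  have h1 : ∀ i : Fin m, ∑ j ∈ ({i}ᶜ : Finset (Fin m)), lam j * lam i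
      = (∑ j, lam j) * lam i - lam i ^ 2 := by
    intro i
    have h := Finset.sum_compl_add_sum ({i} : Finset (Fin m)) (fun j => lam j * lam i)
    simp only [Finset.sum_singleton] at h
    have h2 : (∑ j, lam j) * lam i = ∑ j, lam j * lam i := Finset.sum_mul _ _ _
    rw [h2]; rw [← h]; ring
  calc 2 * ∑ i, ∑ j ∈ Finset.Ioi i, lam i * lam j
      = ∑ i, ∑ j ∈ Finset.Ioi i, (lam j * lam i + lam i * lam j) := by
        rw [Finset.mul_sum]; congr 1; ext i; rw [Finset.mul_sum]; congr 1; ext j; ring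
    _ = ∑ i, ∑ j ∈ ({i}ᶜ : Finset (Fin m)), lam j * lam i := by
        convert Finset.sum_sum_Ioi_add_eq_sum_sum_off_diag fun i j : Fin m => lam i * lam j using 3
    _ = ∑ i, ((∑ j, lam j) * lam i - lam i ^ 2) := Finset.sum_congr rfl (fun i _ => h1 i)
    _ = (∑ i, lam i) ^ 2 - ∑ i, lam i ^ 2 := by
        rw [Finset.sum_sub_distrib, ← Finset.mul_sum]; ring

/-- degenerate ellipticity (5.5). If the eigenvalues of a real
symmetric matrix `A` satisfy `S₁(λ) ≥ 0` and `S₂(λ) ≥ 0`, then `(trace A)·I - A` is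
positive semidefinite. -/
theorem trace_id_sub_posSemidef (m : ℕ) (A : Matrix (Fin m) (Fin m) ℝ)
    (hA : A.IsHermitian)
    (h1 : 0 ≤ esymmF 1 hA.eigenvalues) (h2 : 0 ≤ esymmF 2 hA.eigenvalues) :
    (A.trace • (1 : Matrix (Fin m) (Fin m) ℝ) - A).PosSemidef := by
  set lam := hA.eigenvalues with hlam
  set U := (Matrix.IsHermitian.eigenvectorUnitary hA : Matrix (Fin m) (Fin m) ℝ) with hUdef
  have hU : U * star U = 1 :=
    (Matrix.mem_unitaryGroup_iff).mp (Matrix.IsHermitian.eigenvectorUnitary hA).2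
  have hspec : A = U * Matrix.diagonal lam * star U := by
    have := hA.spectral_theorem
    simpa using this
  have htr : A.trace = ∑ i, lam i := by
    rw [hspec, Matrix.trace_mul_comm, ← Matrix.mul_assoc]
    have hU' : star U * U = 1 :=
      (Matrix.mem_unitaryGroup_iff').mp (Matrix.IsHermitian.eigenvectorUnitary hA).2
    rw [hU', Matrix.one_mul, Matrix.trace_diagonal]
  have h1' : 0 ≤ ∑ i, lam i := by rwa [esymmF_one] at h1
  have h2' : 0 ≤ (∑ i, lam i) ^ 2 - ∑ i, lam i ^ 2 := by
    have := esymmF_two_identity lam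
    linarith
  have key : ∀ i, lam i ≤ ∑ j, lam j := by
    intro i
    have hsq : lam i ^ 2 ≤ ∑ j, lam j ^ 2 :=
      Finset.single_le_sum (f := fun j => lam j ^ 2) (fun j _ => sq_nonneg _)
        (Finset.mem_univ i)
    nlinarith [h1', h2', hsq]
  have hdiagPSD : (Matrix.diagonal (fun i => A.trace - lam i)).PosSemidef :=
    Matrix.posSemidef_diagonal_iff.mpr fun i => by
      rw [htr]; have := key i; simpa using sub_nonneg.mpr this
  have hB : A.trace • (1 : Matrix (Fin m) (Fin m) ℝ) - A
      = U * Matrix.diagonal (fun i => A.trace - lam i) * star U := by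
    have hdiag : Matrix.diagonal (fun i => A.trace - lam i)
        = A.trace • (1 : Matrix (Fin m) (Fin m) ℝ) - Matrix.diagonal lam := by
      ext i j
      by_cases h : i = j <;>
        simp [Matrix.diagonal_apply, Matrix.one_apply, h]
    rw [hdiag, Matrix.mul_sub, Matrix.sub_mul, ← hspec]
    congr 1
    rw [Matrix.mul_smul, Matrix.mul_one, Matrix.smul_mul, hU]
  rw [hB]
  exact hdiagPSD.mul_mul_conjTranspose_same U
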